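/- Let g be a finite-dimensional complex Lie algebra and f a nonzero homogeneous element of the symmetric algebra S(g) such that for every g-element expressed as a polynomial, the Poisson bracket {f,h} is divisible by f. Then f is a semi-invariant: there exists a linear character χ: g → ℂ vanishing on [g,g] such that {f,h} = χ(dh)·f for all h ∈ S(g), where dh denotes the linear part pairing. -/

import Mathlib

open MvPolynomial

/-- The Lie–Poisson bracket on `S(g) = ℂ[x₁,…,xₙ]`, where `c` are the structure
constants of `g` in a fixed basis: `{f,g} = Σ_{i,j} [xᵢ,xⱼ] ∂f/∂xᵢ ∂g/∂xⱼ`. -/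
noncomputable def poissonBracket (n : ℕ) (c : Fin n → Fin n → Fin n → ℂ)
    (f g : MvPolynomial (Fin n) ℂ) : MvPolynomial (Fin n) ℂ :=
  ∑ i : Fin n, ∑ j : Fin n,
    (∑ k : Fin n, C (c i j k) * X k) * pderiv i f * pderiv j g

namespace PBAux

variable {n : ℕ}

/-- `Lm c a i = [x_a, x_i]` as a linear polynomial. -/
noncomputable def Lm (c : Fin n → Fin n → Fin n → ℂ) (a i : Fin n) :
    MvPolynomial (Fin n) ℂ := ∑ k, C (c a i k) * X k

/-- `A c f i = {f, x_i}`. -/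
noncomputable def A (c : Fin n → Fin n → Fin n → ℂ) (f : MvPolynomial (Fin n) ℂ)
    (i : Fin n) : MvPolynomial (Fin n) ℂ := ∑ a, Lm c a i * pderiv a f

lemma pderiv_Lm (c : Fin n → Fin n → Fin n → ℂ) (a i b : Fin n) :
    pderiv b (Lm c a i) = C (c a i b) := by
  classical
  simp only [Lm, map_sum, pderiv_C_mul, pderiv_X]
  rw [Finset.sum_eq_single b]
  · simp
  · intro k _ hk; simp [Pi.single_eq_of_ne hk]
  · simp

lemma bracket_eq (c : Fin n → Fin n → Fin n → ℂ) (f h : MvPolynomial (Fin n) ℂ) :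
    poissonBracket n c f h = ∑ j, A c f j * pderiv j h := by
  rw [poissonBracket, Finset.sum_comm]
  refine Finset.sum_congr rfl fun j _ => ?_
  rw [A, Finset.sum_mul]
  exact Finset.sum_congr rfl fun i _ => by rw [Lm]

lemma bracket_X (c : Fin n → Fin n → Fin n → ℂ) (f : MvPolynomial (Fin n) ℂ) (j : Fin n) :
    poissonBracket n c f (X j) = A c f j := by
  classical
  rw [bracket_eq, Finset.sum_eq_single j]
  · simp
  · intro k _ hk; simp [pderiv_X, Pi.single_eq_of_ne (Ne.symm hk)]
  · simp

lemma scal (c : Fin n → Fin n → Fin n → ℂ)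
    (hskew : ∀ i j k, c i j k = - c j i k)
    (hjacobi : ∀ i j l m, (∑ k, c i j k * c k l m) + (∑ k, c j l k * c k i m) +
      (∑ k, c l i k * c k j m) = 0)
    (a i j l : Fin n) :
    ∑ k, c i j k * c a k l = ∑ b, (c a i b * c b j l - c a j b * c b i l) := by
  calc ∑ k, c i j k * c a k l
      = -∑ k, c i j k * c k a l := by
        rw [← Finset.sum_neg_distrib]
        exact Finset.sum_congr rfl fun k _ => by rw [hskew a k l]; ring
    _ = (∑ k, c j a k * c k i l) + ∑ k, c a i k * c k j l := by
        linear_combination -(hjacobi i j a l)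
    _ = ∑ b, (c a i b * c b j l - c a j b * c b i l) := by
        rw [← Finset.sum_add_distrib]
        exact Finset.sum_congr rfl fun k _ => by rw [hskew j a k]; ring

lemma poly_scal (c : Fin n → Fin n → Fin n → ℂ)
    (hskew : ∀ i j k, c i j k = - c j i k)
    (hjacobi : ∀ i j l m, (∑ k, c i j k * c k l m) + (∑ k, c j l k * c k i m) +
      (∑ k, c l i k * c k j m) = 0)
    (a i j : Fin n) :
    ∑ k, C (c i j k) * Lm c a k
      = ∑ b, (C (c a i b) * Lm c b j - C (c a j b) * Lm c b i) := by
  have lhs : ∑ k, C (c i j k) * Lm c a k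
      = ∑ l, C (∑ k, c i j k * c a k l) * X l := by
    simp only [Lm, Finset.mul_sum, ← mul_assoc, ← C_mul]
    rw [Finset.sum_comm]
    refine Finset.sum_congr rfl fun l _ => ?_
    rw [← Finset.sum_mul, ← map_sum]
  have rhs : ∑ b, (C (c a i b) * Lm c b j - C (c a j b) * Lm c b i)
      = ∑ l, C (∑ b, (c a i b * c b j l - c a j b * c b i l)) * X l := by
    simp only [Lm, Finset.mul_sum, ← mul_assoc, ← C_mul, ← Finset.sum_sub_distrib,
      ← sub_mul, ← map_sub]
    rw [Finset.sum_comm]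
    refine Finset.sum_congr rfl fun l _ => ?_
    rw [← Finset.sum_mul, ← map_sum]
  rw [lhs, rhs]
  exact Finset.sum_congr rfl fun l _ => by rw [scal c hskew hjacobi a i j l]

lemma pderiv_comm (a b : Fin n) (p : MvPolynomial (Fin n) ℂ) :
    pderiv a (pderiv b p) = pderiv b (pderiv a p) := by
  classical
  induction p using MvPolynomial.induction_on with
  | C r => simp
  | add p q hp hq => simp [hp, hq]
  | mul_X p j hp =>
      simp only [pderiv_mul, map_add, pderiv_mul, hp]
      by_cases hbj : b = j <;> by_cases haj : a = j <;>
        simp [hbj, haj, pderiv_X, Pi.single_apply] <;> ring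

lemma keyalg (c : Fin n → Fin n → Fin n → ℂ)
    (hskew : ∀ i j k, c i j k = - c j i k)
    (hjacobi : ∀ i j l m, (∑ k, c i j k * c k l m) + (∑ k, c j l k * c k i m) +
      (∑ k, c l i k * c k j m) = 0)
    (f : MvPolynomial (Fin n) ℂ) (i j : Fin n) :
    ∑ k, C (c i j k) * A c f k
      = (∑ b, Lm c b j * pderiv b (A c f i)) - ∑ b, Lm c b i * pderiv b (A c f j) := by
  have hder : ∀ i' b, pderiv b (A c f i')
      = ∑ a, (C (c a i' b) * pderiv a f + Lm c a i' * pderiv b (pderiv a f)) := by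
    intro i' b
    rw [A, map_sum]
    exact Finset.sum_congr rfl fun a _ => by rw [pderiv_mul, pderiv_Lm]
  simp only [hder, Finset.mul_sum, mul_add, Finset.sum_add_distrib]
  have h2 : ∑ b, ∑ a, Lm c b j * (Lm c a i * pderiv b (pderiv a f))
      = ∑ b, ∑ a, Lm c b i * (Lm c a j * pderiv b (pderiv a f)) := by
    rw [Finset.sum_comm]
    refine Finset.sum_congr rfl fun b _ => Finset.sum_congr rfl fun a _ => ?_
    rw [pderiv_comm]; ring
  rw [h2, add_sub_add_right_eq_sub, ← Finset.sum_sub_distrib]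
  simp only [← Finset.sum_sub_distrib]
  rw [Finset.sum_comm]
  simp only [A, Finset.mul_sum]
  rw [Finset.sum_comm]
  refine Finset.sum_congr rfl fun a _ => ?_
  have := poly_scal c hskew hjacobi a i j
  calc ∑ k, C (c i j k) * (Lm c a k * pderiv a f)
      = (∑ k, C (c i j k) * Lm c a k) * pderiv a f := by
        rw [Finset.sum_mul]; exact Finset.sum_congr rfl fun k _ => by ring
    _ = (∑ b, (C (c a i b) * Lm c b j - C (c a j b) * Lm c b i)) * pderiv a f := by rw [this]
    _ = ∑ b, (Lm c b j * (C (c a i b) * pderiv a f) - Lm c b i * (C (c a j b) * pderiv a f)) := by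
        rw [Finset.sum_mul]; exact Finset.sum_congr rfl fun b _ => by ring

lemma degree_eq_sum_univ (v : Fin n →₀ ℕ) : v.degree = ∑ i : Fin n, v i :=
  Finset.sum_subset (Finset.subset_univ _)
    (fun i _ hi => by simpa using Finsupp.notMem_support_iff.mp hi)

lemma euler_mono (d : Fin n →₀ ℕ) (r : ℂ) :
    ∑ i : Fin n, X i * pderiv i (monomial d r)
      = C ((d.degree : ℂ)) * monomial d r := by
  classical
  have key : ∀ i : Fin n, X i * pderiv i (monomial d r) = monomial d (r * d i) := by
    intro i
    rw [pderiv_monomial]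
    by_cases h : d i = 0
    · simp [h]
    · have hE : Finsupp.single i 1 + (d - Finsupp.single i 1) = d := by
        ext j
        by_cases hj : j = i
        · subst hj
          simp only [Finsupp.add_apply, Finsupp.single_eq_same, Finsupp.tsub_apply]
          omega
        · simp [Finsupp.single_eq_of_ne' (Ne.symm hj), Finsupp.tsub_apply]
      rw [X, monomial_mul, one_mul, hE]
  simp only [key]
  rw [← map_sum (monomial d), C_mul_monomial]
  congr 1
  rw [degree_eq_sum_univ]
  push_cast
  rw [Finset.sum_mul]
  exact Finset.sum_congr rfl fun i _ => by ring

lemma euler (p : MvPolynomial (Fin n) ℂ) (m : ℕ) (hp : p.IsHomogeneous m) :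
    ∑ i : Fin n, X i * pderiv i p = C (m : ℂ) * p := by
  conv_lhs => rw [p.as_sum]
  simp only [map_sum, Finset.mul_sum]
  rw [Finset.sum_comm]
  conv_rhs => rw [p.as_sum, Finset.mul_sum]
  refine Finset.sum_congr rfl fun v hv => ?_
  rw [euler_mono]
  congr 2
  have : v.degree = m := by
    have := hp (mem_support_iff.mp hv)
    rw [Finsupp.degree_eq_weight_one]; exact this
  rw [this]

lemma const_of_mul_homog (f q : MvPolynomial (Fin n) ℂ) (hf0 : f ≠ 0) (m : ℕ)
    (hf : f.IsHomogeneous m) (hfq : (f * q).IsHomogeneous m) :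
    q = C (coeff 0 q) := by
  have h1 : ∑ i : Fin n, X i * pderiv i (f * q) = C (m : ℂ) * (f * q) :=
    euler _ _ hfq
  have h2 : ∑ i : Fin n, X i * pderiv i f = C (m : ℂ) * f := euler _ _ hf
  have h3 : f * (∑ i : Fin n, X i * pderiv i q) = 0 := by
    have : ∑ i : Fin n, X i * pderiv i (f * q)
        = (∑ i : Fin n, X i * pderiv i f) * q + f * ∑ i : Fin n, X i * pderiv i q := by
      rw [Finset.sum_mul, Finset.mul_sum, ← Finset.sum_add_distrib]
      exact Finset.sum_congr rfl fun i _ => by rw [pderiv_mul]; ring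
    rw [this, h2] at h1
    linear_combination h1
  have h4 : ∑ i : Fin n, X i * pderiv i q = 0 := by
    rcases mul_eq_zero.mp h3 with h | h
    · exact absurd h hf0
    · exact h
  -- conclude q is constant
  ext d
  by_cases hd : d = 0
  · subst hd; simp
  · rw [coeff_C, if_neg (Ne.symm hd)]
    by_contra hcoeff
    have hd' : d ∈ q.support := mem_support_iff.mpr hcoeff
    have : coeff d (∑ i : Fin n, X i * pderiv i q) = (d.degree : ℂ) * coeff d q := by
      conv_lhs => rw [q.as_sum]
      simp only [map_sum, Finset.mul_sum]
      rw [Finset.sum_comm]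
      simp only [euler_mono]
      rw [coeff_sum, Finset.sum_eq_single d]
      · rw [coeff_C_mul, coeff_monomial, if_pos rfl]
      · intro v _ hvd
        rw [coeff_C_mul, coeff_monomial, if_neg hvd, mul_zero]
      · intro hdd; exact absurd hd' hdd
    rw [h4] at this
    simp only [coeff_zero] at this
    have hdeg : (d.degree : ℂ) ≠ 0 := by
      simp only [ne_eq, Nat.cast_eq_zero]
      rw [Finsupp.degree_eq_zero_iff]
      exact hd
    exact hcoeff (by
      rcases mul_eq_zero.mp this.symm with h | h
      · exact absurd h hdeg
      · exact h)

lemma Lm_homog (c : Fin n → Fin n → Fin n → ℂ) (a i : Fin n) :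
    (Lm c a i).IsHomogeneous 1 :=
  IsHomogeneous.sum _ _ _ fun k _ => isHomogeneous_C_mul_X _ _

lemma pderiv_homog (f : MvPolynomial (Fin n) ℂ) (m : ℕ) (hf : f.IsHomogeneous m)
    (a : Fin n) : (pderiv a f).IsHomogeneous (m - 1) := by
  classical
  conv_lhs => rw [f.as_sum]
  rw [map_sum]
  refine IsHomogeneous.sum _ _ _ fun v hv => ?_
  rw [pderiv_monomial]
  by_cases h : v a = 0
  · simp only [h, Nat.cast_zero, mul_zero, map_zero]
    exact isHomogeneous_zero _ _ _
  · apply isHomogeneous_monomial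
    have hvd : v.degree = m := by
      have := hf (mem_support_iff.mp hv)
      rw [Finsupp.degree_eq_weight_one]; exact this
    rw [degree_eq_sum_univ] at hvd ⊢
    have e1 : ∑ j ∈ Finset.univ.erase a, (v - Finsupp.single a 1 : Fin n →₀ ℕ) j
        = ∑ j ∈ Finset.univ.erase a, v j := by
      refine Finset.sum_congr rfl fun j hj => ?_
      rw [Finsupp.tsub_apply, Finsupp.single_eq_of_ne' (Ne.symm (Finset.ne_of_mem_erase hj))]
      omega
    have e2 : (v - Finsupp.single a 1 : Fin n →₀ ℕ) a = v a - 1 := by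
      rw [Finsupp.tsub_apply, Finsupp.single_eq_same]
    rw [← Finset.sum_erase_add _ _ (Finset.mem_univ a), e1, e2]
    rw [← Finset.sum_erase_add _ _ (Finset.mem_univ a)] at hvd
    omega

lemma A_homog (c : Fin n → Fin n → Fin n → ℂ) (f : MvPolynomial (Fin n) ℂ) (m : ℕ)
    (hm : 1 ≤ m) (hf : f.IsHomogeneous m) (i : Fin n) : (A c f i).IsHomogeneous m := by
  rw [A]
  refine IsHomogeneous.sum _ _ _ fun a _ => ?_
  have := (Lm_homog c a i).mul (pderiv_homog f m hf a)
  rwa [show 1 + (m - 1) = m by omega] at this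

end PBAux

open PBAux

theorem stmt0 (n : ℕ) (c : Fin n → Fin n → Fin n → ℂ)
    (hskew : ∀ i j k, c i j k = - c j i k)
    (hjacobi : ∀ i j l m, (∑ k, c i j k * c k l m) + (∑ k, c j l k * c k i m) +
      (∑ k, c l i k * c k j m) = 0)
    (f : MvPolynomial (Fin n) ℂ) (hf0 : f ≠ 0) (m : ℕ) (hhom : f.IsHomogeneous m)
    (hdvd : ∀ h : MvPolynomial (Fin n) ℂ, f ∣ poissonBracket n c f h) :
    ∃ χ : Fin n → ℂ, (∀ i j, ∑ k, c i j k * χ k = 0) ∧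
      ∀ h : MvPolynomial (Fin n) ℂ,
        poissonBracket n c f h = (∑ i, C (χ i) * pderiv i h) * f := by
  -- the case m = 0 : f is a constant
  rcases Nat.eq_zero_or_pos m with hm0 | hm
  · subst hm0
    have hfc : f = C (coeff 0 f) := by
      ext d
      by_cases hd : d = 0
      · subst hd; simp
      · rw [coeff_C, if_neg (Ne.symm hd)]
        exact hhom.coeff_eq_zero
          (fun hdeg => hd ((Finsupp.degree_eq_zero_iff d).mp hdeg))
    refine ⟨0, by simp, fun h => ?_⟩
    have : ∀ i : Fin n, pderiv i f = 0 := by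
      intro i; rw [hfc]; exact pderiv_C
    simp [poissonBracket, this]
  -- main case
  · have hA : ∀ j, ∃ a : ℂ, A c f j = C a * f := by
      intro j
      obtain ⟨q, hq⟩ := hdvd (X j)
      rw [bracket_X] at hq
      have hhomA : (A c f j).IsHomogeneous m := A_homog c f m hm hhom j
      rw [hq] at hhomA
      have := const_of_mul_homog f q hf0 m hhom hhomA
      exact ⟨coeff 0 q, by rw [hq]; nth_rewrite 1 [this]; ring⟩
    choose χ hχ using hA
    refine ⟨χ, ?_, ?_⟩
    · intro i j
      have key := keyalg c hskew hjacobi f i j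
      simp only [hχ] at key
      have hrhs : (∑ b, Lm c b j * pderiv b (C (χ i) * f))
          - ∑ b, Lm c b i * pderiv b (C (χ j) * f) = 0 := by
        simp only [pderiv_C_mul]
        have e1 : ∑ b, Lm c b j * (C (χ i) * pderiv b f)
            = C (χ i) * A c f j := by
          rw [A, Finset.mul_sum]
          exact Finset.sum_congr rfl fun b _ => by ring
        have e2 : ∑ b, Lm c b i * (C (χ j) * pderiv b f)
            = C (χ j) * A c f i := by
          rw [A, Finset.mul_sum]
          exact Finset.sum_congr rfl fun b _ => by ring
        rw [e1, e2, hχ, hχ]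
        ring
      rw [hrhs] at key
      have : (C (∑ k, c i j k * χ k) : MvPolynomial (Fin n) ℂ) * f = 0 := by
        rw [← key, map_sum, Finset.sum_mul]
        exact Finset.sum_congr rfl fun k _ => by rw [map_mul]; ring
      rcases mul_eq_zero.mp this with h | h
      · exact (C_injective _ _) (by rw [h, map_zero])
      · exact absurd h hf0
    · intro h
      rw [bracket_eq, Finset.sum_mul]
      exact Finset.sum_congr rfl fun j _ => by rw [hχ]; ring
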